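/- Let T(ε) be the period of the solution to R'' + R/ε² + R³/ε = 0 with R(0)=r₀, R'(0)=v₀/ε, given by T(ε) = 4ε∫₀¹ dR/√(1−R² + (b²ε/2)(1−R⁴)) with b = b(ε) as in equation (b_val). Then T(ε) = 2πε − (3π/4)(r₀²+v₀²)ε² + ((105π/128)(r₀²+v₀²)² − (3π/8)r₀⁴)ε³ + O(ε⁴) as ε → 0⁺. -/

import Mathlib

open Real Filter Asymptotics MeasureTheory Set intervalIntegral

lemma base_int : IntervalIntegrable (fun x : ℝ => (1 - x) ^ (-(1/2) : ℝ)) volume 0 1 := by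
  have h := ((intervalIntegrable_rpow' (a := 0) (b := 1) (r := -(1/2)) (by norm_num)).comp_sub_left 1).symm
  simpa using h

lemma int_helper (f : ℝ → ℝ) (C : ℝ)
    (hm : AEStronglyMeasurable f (volume.restrict (Set.uIoc (0:ℝ) 1)))
    (h : ∀ x ∈ Ioc (0:ℝ) 1, |f x| ≤ C * (1 - x) ^ (-(1/2) : ℝ)) :
    IntervalIntegrable f volume 0 1 := by
  apply IntervalIntegrable.mono_fun ((base_int).const_mul C) hm
  rw [Filter.EventuallyLE, ae_restrict_iff' measurableSet_uIoc]
  apply Filter.Eventually.of_forall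
  intro x hx
  rw [Set.uIoc_of_le (by norm_num : (0:ℝ) ≤ 1)] at hx
  simp only [Real.norm_eq_abs]
  refine (h x hx).trans (le_abs_self _)

lemma g_bound : ∀ x ∈ Ioc (0:ℝ) 1, Real.sqrt (1 - x) ≤ Real.sqrt (1 - x^2) ∧
    1 / Real.sqrt (1 - x^2) ≤ (1 - x) ^ (-(1/2) : ℝ) := by
  intro x hx
  obtain ⟨hx0, hx1⟩ := hx
  have h1 : Real.sqrt (1 - x) ≤ Real.sqrt (1 - x^2) := by
    apply Real.sqrt_le_sqrt; nlinarith
  refine ⟨h1, ?_⟩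
  have h2 : (1 - x) ^ (-(1/2) : ℝ) = 1 / Real.sqrt (1 - x) := by
    rw [Real.rpow_neg (by linarith), ← Real.sqrt_eq_rpow, one_div]
  rw [h2]
  rcases eq_or_lt_of_le hx1 with rfl | hlt
  · simp
  · apply one_div_le_one_div_of_le _ h1
    exact Real.sqrt_pos.mpr (by linarith)

lemma poly_integrable (a0 a2 a4 : ℝ) :
    IntervalIntegrable (fun x => (a0 + a2*x^2 + a4*x^4)/Real.sqrt (1 - x^2)) volume 0 1 := by
  apply int_helper _ (|a0| + |a2| + |a4|)
  · apply Measurable.aestronglyMeasurable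
    apply Measurable.div
    · fun_prop
    · exact (Real.continuous_sqrt.comp (by continuity : Continuous fun a:ℝ => 1 - a^2)).measurable
  · intro x hx
    obtain ⟨hx0, hx1⟩ := hx
    have hg := (g_bound x ⟨hx0, hx1⟩).2
    have hgnn : 0 ≤ 1 / Real.sqrt (1 - x^2) := by positivity
    have hnum : |a0 + a2*x^2 + a4*x^4| ≤ |a0| + |a2| + |a4| := by
      have := abs_add_le (a0 + a2*x^2) (a4*x^4)
      have := abs_add_le a0 (a2*x^2)
      have h2 : |a2*x^2| ≤ |a2| := by
        rw [abs_mul]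
        have : |x^2| ≤ 1 := by rw [abs_of_nonneg (sq_nonneg x)]; nlinarith
        exact mul_le_of_le_one_right (abs_nonneg _) this
      have h4 : |a4*x^4| ≤ |a4| := by
        rw [abs_mul]
        have : |x^4| ≤ 1 := by
          rw [abs_of_nonneg (by positivity)]
          have h := mul_nonneg (by nlinarith : (0:ℝ) ≤ 1 - x^2) (by positivity : (0:ℝ) ≤ 1 + x^2)
          nlinarith
        exact mul_le_of_le_one_right (abs_nonneg _) this
      linarith
    have hCnn : (0:ℝ) ≤ |a0| + |a2| + |a4| := by positivity
    calc |(a0 + a2*x^2 + a4*x^4)/Real.sqrt (1 - x^2)|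
        = |a0 + a2*x^2 + a4*x^4| * (1 / Real.sqrt (1 - x^2)) := by
          rw [abs_div, div_eq_mul_one_div]; congr 1
          rw [abs_of_nonneg (Real.sqrt_nonneg _)]
      _ ≤ (|a0| + |a2| + |a4|) * ((1 - x) ^ (-(1/2) : ℝ)) := by
          apply mul_le_mul hnum hg hgnn hCnn

lemma poly_integral (a0 a2 a4 : ℝ) :
    ∫ x in (0:ℝ)..1, (a0 + a2*x^2 + a4*x^4)/Real.sqrt (1 - x^2)
      = (a0 + a2/2 + 3*a4/8) * (π/2) := by
  have key := intervalIntegral.integral_eq_sub_of_hasDeriv_right_of_le (a:=(0:ℝ)) (b:=1)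
    (f := fun x => (a0 + a2/2 + 3*a4/8) * Real.arcsin x
        - Real.sqrt (1 - x^2) * ((a2/2 + 3*a4/8)*x + (a4/4)*x^3))
    (f' := fun x => (a0 + a2*x^2 + a4*x^4)/Real.sqrt (1 - x^2)) zero_le_one
    (by
      apply Continuous.continuousOn
      apply Continuous.sub
      · exact continuous_const.mul Real.continuous_arcsin
      · exact (Real.continuous_sqrt.comp (by continuity)).mul (by continuity))
    (fun x hx => by
      obtain ⟨hx0, hx1⟩ := hx
      have hpos : 0 < 1 - x^2 := by nlinarith
      have hsne : Real.sqrt (1 - x^2) ≠ 0 := (Real.sqrt_pos.mpr hpos).ne'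
      have hsq : Real.sqrt (1 - x^2) ^ 2 = 1 - x^2 := Real.sq_sqrt hpos.le
      have ha : HasDerivAt Real.arcsin (1/Real.sqrt (1 - x^2)) x :=
        Real.hasDerivAt_arcsin (by nlinarith) (by nlinarith)
      have hinner : HasDerivAt (fun y : ℝ => 1 - y^2) (-(2*x)) x := by
        simpa using ((hasDerivAt_pow 2 x).const_sub 1)
      have hsqrt : HasDerivAt (fun y : ℝ => Real.sqrt (1 - y^2))
          (1/(2*Real.sqrt (1 - x^2)) * (-(2*x))) x :=
        (Real.hasDerivAt_sqrt hpos.ne').comp x hinner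
      have hpoly : HasDerivAt (fun y : ℝ => (a2/2 + 3*a4/8)*y + (a4/4)*y^3)
          ((a2/2 + 3*a4/8)*1 + (a4/4)*(3*x^2)) x := by
        exact ((hasDerivAt_id x).const_mul _).add (((hasDerivAt_pow 3 x).const_mul (a4/4)).congr_deriv (by ring))
      have h := ((ha.const_mul (a0 + a2/2 + 3*a4/8)).sub (hsqrt.mul hpoly))
      refine (h.congr_deriv ?_).hasDerivWithinAt
      have step : ∀ p pd : ℝ, (a0 + a2/2 + 3*a4/8) * (1/Real.sqrt (1-x^2))
          - (1/(2*Real.sqrt (1-x^2)) * -(2*x) * p + Real.sqrt (1-x^2) * pd)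
          = ((a0 + a2/2 + 3*a4/8) + x*p - (1-x^2)*pd)/Real.sqrt (1-x^2) := by
        intro p pd
        rw [← hsq]
        field_simp
        have hT : Real.sqrt (Real.sqrt (1-x^2)^2)^2 = Real.sqrt (1-x^2)^2 := Real.sq_sqrt (by positivity)
        linear_combination (-16*pd) * hT
      rw [step]
      rw [div_left_inj' hsne]
      ring
      )
    (poly_integrable a0 a2 a4)
  rw [key]
  simp [Real.arcsin_one]

lemma inv_sqrt_taylor (u : ℝ) (h0 : 0 ≤ u) (h1 : u ≤ 1) :
    |1/Real.sqrt (1+u) - (1 - u/2 + 3*u^2/8)| ≤ 5/16*u^3 := by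
  have htpos : 0 < Real.sqrt (1+u) := Real.sqrt_pos.mpr (by linarith)
  have ht2 : Real.sqrt (1+u)^2 = 1+u := Real.sq_sqrt (by linarith)
  set t := Real.sqrt (1+u) with htdef
  have hq : 0 < 1 - u/2 + 3*u^2/8 := by nlinarith [sq_nonneg u]
  have h4 : (0:ℝ) ≤ u^4 := by positivity
  have h5 : u^5 ≤ u^4 := by nlinarith [mul_nonneg h4 (by linarith : (0:ℝ) ≤ 1 - u)]
  have h6 : (0:ℝ) ≤ u^6 := by positivity
  have h7 : u^7 ≤ u^4 := by
    have := mul_nonneg h4 (mul_nonneg (mul_nonneg h0 h0) (by linarith : (0:ℝ) ≤ 1 - u))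
    nlinarith [this]
  have hub : 1/t ≤ 1 - u/2 + 3*u^2/8 := by
    rw [div_le_iff₀ htpos]
    have hpoly : 1 ≤ (1+u)*(1 - u/2 + 3*u^2/8)^2 := by
      nlinarith [mul_nonneg (mul_nonneg h0 h0) h0, sq_nonneg u]
    have key : ((1 - u/2 + 3*u^2/8)*t)^2 = (1+u)*(1 - u/2 + 3*u^2/8)^2 := by
      rw [mul_pow, ht2]; ring
    nlinarith [mul_pos hq htpos, key, hpoly]
  have hr : 0 < 1 - u/2 + 3*u^2/8 - 5/16*u^3 := by nlinarith [sq_nonneg u, mul_nonneg (mul_nonneg h0 h0) h0]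
  have hlb : 1 - u/2 + 3*u^2/8 - 5/16*u^3 ≤ 1/t := by
    rw [le_div_iff₀ htpos]
    have hpoly : (1+u)*(1 - u/2 + 3*u^2/8 - 5/16*u^3)^2 ≤ 1 := by nlinarith [h5, h6, h7, h4]
    have key : ((1 - u/2 + 3*u^2/8 - 5/16*u^3)*t)^2 = (1+u)*(1 - u/2 + 3*u^2/8 - 5/16*u^3)^2 := by
      rw [mul_pow, ht2]; ring
    nlinarith [mul_pos hr htpos, key, hpoly]
  have hu3 : (0:ℝ) ≤ u^3 := by positivity
  rw [abs_le]
  constructor <;> [linarith; linarith]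

lemma sqrt_taylor (x : ℝ) (h0 : 0 ≤ x) (h1 : x ≤ 1) :
    |Real.sqrt (1+x) - (1 + x/2 - x^2/8)| ≤ x^3/16 := by
  have hp : (0:ℝ) < 1 + x/2 - x^2/8 + x^3/16 := by nlinarith
  rw [abs_le]
  constructor
  · rw [neg_le, neg_sub, sub_le_iff_le_add]
    have h2 : (1 + x/2 - x^2/8)^2 ≤ 1 + x := by nlinarith [sq_nonneg x, mul_nonneg (mul_nonneg h0 h0) h0]
    have := Real.sqrt_le_sqrt h2
    rw [Real.sqrt_sq (by nlinarith)] at this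
    nlinarith [pow_nonneg h0 3]
  · rw [sub_le_iff_le_add]
    have h2 : 1 + x ≤ (1 + x/2 - x^2/8 + x^3/16)^2 := by nlinarith [sq_nonneg x, mul_nonneg (mul_nonneg h0 h0) h0, sq_nonneg (x^2), sq_nonneg (x^3), sq_nonneg (x-1)]
    have := Real.sqrt_le_sqrt h2
    rw [Real.sqrt_sq hp.le] at this
    linarith

set_option maxHeartbeats 1000000 in
lemma J_est (c : ℝ) (hc : 0 ≤ c) (hc1 : c ≤ 1/2) :
    |(∫ R in (0:ℝ)..1, 1 / Real.sqrt (1 - R^2 + c*(1-R^4)))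
      - (π/2 - 3*π/8*c + 57*π/128*c^2)| ≤ 5*π/4*c^3 := by
  have hP : (∫ x in (0:ℝ)..1, ((1 - c/2 + 3*c^2/8) + (-c/2 + 3*c^2/4)*x^2 + (3*c^2/8)*x^4)/Real.sqrt (1-x^2))
      = π/2 - 3*π/8*c + 57*π/128*c^2 := by
    rw [poly_integral]; ring
  have hp_int := poly_integrable (1 - c/2 + 3*c^2/8) (-c/2 + 3*c^2/4) (3*c^2/8)
  have hf_int : IntervalIntegrable (fun R => 1 / Real.sqrt (1 - R^2 + c*(1-R^4))) volume 0 1 := by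
    apply int_helper _ 1
    · apply Measurable.aestronglyMeasurable
      apply Measurable.div measurable_const
      exact (Real.continuous_sqrt.comp (by continuity : Continuous fun a:ℝ => 1 - a^2 + c*(1-a^4))).measurable
    · intro x hx
      obtain ⟨hx0, hx1⟩ := hx
      rcases eq_or_lt_of_le hx1 with rfl | hlt
      · norm_num [Real.zero_rpow]
      · have h1x : 0 < 1 - x := by linarith
        have hx4 : x^4 ≤ 1 := pow_le_one₀ hx0.le hx1
        have harg : 1 - x ≤ 1 - x^2 + c*(1-x^4) := by nlinarith [mul_nonneg hc (by nlinarith : (0:ℝ) ≤ 1 - x^4)]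
        have hsp : 0 < Real.sqrt (1 - x) := Real.sqrt_pos.mpr h1x
        have hle := Real.sqrt_le_sqrt harg
        have : |1 / Real.sqrt (1 - x^2 + c*(1-x^4))| = 1 / Real.sqrt (1 - x^2 + c*(1-x^4)) := by
          rw [abs_of_nonneg]; positivity
        rw [this, show (1:ℝ) * (1-x) ^ (-(1/2):ℝ) = 1/Real.sqrt (1-x) by
          rw [Real.rpow_neg h1x.le, ← Real.sqrt_eq_rpow, one_div, one_mul]]
        exact one_div_le_one_div_of_le hsp hle
  have hub_int := poly_integrable (5/2*c^3) 0 0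
  have hub_val : (∫ x in (0:ℝ)..1, ((5/2*c^3) + 0*x^2 + 0*x^4)/Real.sqrt (1-x^2)) = 5*π/4*c^3 := by
    rw [poly_integral]; ring
  have hsub := intervalIntegral.integral_sub hf_int hp_int
  have key : ‖∫ R in (0:ℝ)..1, (1 / Real.sqrt (1 - R^2 + c*(1-R^4))
      - ((1 - c/2 + 3*c^2/8) + (-c/2 + 3*c^2/4)*R^2 + (3*c^2/8)*R^4)/Real.sqrt (1-R^2))‖
      ≤ |∫ x in (0:ℝ)..1, ((5/2*c^3) + 0*x^2 + 0*x^4)/Real.sqrt (1-x^2)| := by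
    apply intervalIntegral.norm_integral_le_abs_of_norm_le _ hub_int
    rw [ae_restrict_iff' measurableSet_uIoc]
    apply Filter.Eventually.of_forall
    intro x hx
    rw [Set.uIoc_of_le (by norm_num : (0:ℝ) ≤ 1)] at hx
    obtain ⟨hx0, hx1⟩ := hx
    rcases eq_or_lt_of_le hx1 with rfl | hlt
    · norm_num
    · have hx2 : 0 < 1 - x^2 := by nlinarith
      have hs1 : 0 < Real.sqrt (1 - x^2) := Real.sqrt_pos.mpr hx2
      have hu0 : 0 ≤ c*(1+x^2) := mul_nonneg hc (by positivity)
      have hu1 : c*(1+x^2) ≤ 1 := by nlinarith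
      have hfact : Real.sqrt (1 - x^2 + c*(1-x^4))
          = Real.sqrt (1-x^2) * Real.sqrt (1+c*(1+x^2)) := by
        rw [show 1 - x^2 + c*(1-x^4) = (1-x^2)*(1+c*(1+x^2)) by ring, Real.sqrt_mul hx2.le]
      have hid : 1 / Real.sqrt (1 - x^2 + c*(1-x^4))
          - ((1 - c/2 + 3*c^2/8) + (-c/2 + 3*c^2/4)*x^2 + (3*c^2/8)*x^4)/Real.sqrt (1-x^2)
          = (1/Real.sqrt (1-x^2)) * (1/Real.sqrt (1+c*(1+x^2))
            - (1 - (c*(1+x^2))/2 + 3*(c*(1+x^2))^2/8)) := by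
        rw [hfact]
        field_simp
        ring
      rw [hid, Real.norm_eq_abs, abs_mul, abs_of_nonneg (by positivity : (0:ℝ) ≤ 1/Real.sqrt (1-x^2))]
      have hL2 := inv_sqrt_taylor (c*(1+x^2)) hu0 hu1
      have hx21 : x^2 ≤ 1 := by nlinarith
      have h8 : (1+x^2)^3 ≤ 8 := by nlinarith [sq_nonneg x, sq_nonneg (x^2), sq_nonneg (1 - x^2)]
      have hu3 : (c*(1+x^2))^3 ≤ 8*c^3 := by
        rw [mul_pow]
        calc c^3 * (1+x^2)^3 ≤ c^3 * 8 := by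
              apply mul_le_mul_of_nonneg_left h8 (by positivity)
          _ = 8*c^3 := by ring
      calc 1/Real.sqrt (1-x^2) * |1/Real.sqrt (1+c*(1+x^2)) - (1 - (c*(1+x^2))/2 + 3*(c*(1+x^2))^2/8)|
          ≤ 1/Real.sqrt (1-x^2) * (5/16*(8*c^3)) := by
            apply mul_le_mul_of_nonneg_left _ (by positivity)
            refine hL2.trans ?_
            linarith only [hu3]
        _ = ((5/2*c^3) + 0*x^2 + 0*x^4)/Real.sqrt (1-x^2) := by ring
  rw [hub_val] at key
  rw [hsub] at key
  rw [hP] at key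
  rw [abs_of_nonneg (by positivity : (0:ℝ) ≤ 5*π/4*c^3)] at key
  exact key


lemma d_bound_aux (s r4 ε x A : ℝ) (hs : 0 ≤ s) (hr4 : 0 ≤ r4) (hε : 0 < ε) (hε1 : ε ≤ 1)
    (hx3 : x^3 ≤ (2*s+r4)^3*ε^3) (hA : |A| ≤ x^3/16) :
    |A/2 - s*r4/4*ε^3 - r4^2/16*ε^4| ≤ ((2*s+r4)^3/32 + s*r4/4 + r4^2/16)*ε^3 := by
  obtain ⟨hl, hr⟩ := abs_le.mp hA
  have hε43 : ε^4 ≤ ε^3 := pow_le_pow_of_le_one hε.le hε1 (by norm_num)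
  have h1 : 0 ≤ s*r4*ε^3 := by positivity
  have h2 : 0 ≤ r4^2*ε^4 := by positivity
  have h3 : 0 ≤ r4^2*ε^3 := by positivity
  rw [abs_le]
  constructor <;> nlinarith [h1, h2, h3, hε43]

set_option maxHeartbeats 1000000 in
theorem duffing_period_expansion (r₀ v₀ : ℝ) (b : ℝ → ℝ)
    (hb : ∀ ε : ℝ, b ε
      = Real.sqrt ((Real.sqrt (1 + 2 * ε * (r₀ ^ 2 + v₀ ^ 2) + ε ^ 2 * r₀ ^ 4) - 1) / ε))
    (T : ℝ → ℝ)
    (hT : ∀ ε : ℝ, 0 < ε →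
      T ε = 4 * ε * ∫ R in (0:ℝ)..1,
        1 / Real.sqrt (1 - R ^ 2 + ((b ε) ^ 2 * ε / 2) * (1 - R ^ 4))) :
    (fun ε : ℝ => T ε - (2 * π * ε - (3 * π / 4) * (r₀ ^ 2 + v₀ ^ 2) * ε ^ 2
        + ((105 * π / 128) * (r₀ ^ 2 + v₀ ^ 2) ^ 2 - (3 * π / 8) * r₀ ^ 4) * ε ^ 3))
      =O[nhdsWithin 0 (Set.Ioi 0)] fun ε : ℝ => ε ^ 4 := by
  obtain ⟨s, hs_def⟩ : ∃ y : ℝ, y = r₀ ^ 2 + v₀ ^ 2 := ⟨_, rfl⟩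
  rw [← hs_def] at hb ⊢
  have hs : 0 ≤ s := by rw [hs_def]; positivity
  have hr4 : (0:ℝ) ≤ r₀^4 := by positivity
  obtain ⟨K, hK_def⟩ : ∃ y : ℝ, y = 2*s + r₀^4 := ⟨_, rfl⟩
  have hK : 0 ≤ K := by rw [hK_def]; positivity
  obtain ⟨K₂, hK2_def⟩ : ∃ y : ℝ, y = K^3/32 + s*r₀^4/4 + r₀^8/16 := ⟨_, rfl⟩
  have hK2 : 0 ≤ K₂ := by rw [hK2_def]; positivity
  obtain ⟨K₃, hK3_def⟩ : ∃ y : ℝ, y = K₂ + |r₀^4 - s^2|/4 := ⟨_, rfl⟩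
  have hK3 : 0 ≤ K₃ := by rw [hK3_def]; positivity
  obtain ⟨K₄, hK4_def⟩ : ∃ y : ℝ, y = K/4 + s/2 := ⟨_, rfl⟩
  have hK4 : 0 ≤ K₄ := by rw [hK4_def]; positivity
  have hδ : (0:ℝ) < 1/(K+1) := by positivity
  apply Asymptotics.IsBigO.of_bound (5*π*K^3/64 + 3*π/2*K₂ + 57*π/32*(K₃*K₄))
  have hlt : ∀ᶠ ε in nhdsWithin (0:ℝ) (Set.Ioi 0), ε < 1/(K+1) :=
    Filter.Eventually.filter_mono nhdsWithin_le_nhds (eventually_lt_nhds hδ)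
  filter_upwards [self_mem_nhdsWithin, hlt] with ε hε hεδ
  have hε : (0:ℝ) < ε := hε
  have hε1 : ε ≤ 1 := by
    have : 1/(K+1) ≤ 1 := by rw [div_le_one (by linarith)]; linarith
    linarith
  -- basic quantities
  obtain ⟨x, hx_def⟩ : ∃ y : ℝ, y = 2*ε*s + ε^2*r₀^4 := ⟨_, rfl⟩
  have hx0 : 0 ≤ x := by rw [hx_def]; positivity
  have hxK : x ≤ K*ε := by
    rw [hx_def, hK_def]
    nlinarith [mul_nonneg (mul_nonneg hε.le hε.le) hr4]
  have hx1 : x ≤ 1 := by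
    have h2 : K*ε ≤ K*(1/(K+1)) := by
      apply mul_le_mul_of_nonneg_left hεδ.le hK
    have : K*(1/(K+1)) ≤ 1 := by
      rw [mul_one_div, div_le_one (by linarith)]; linarith
    linarith
  obtain ⟨c, hc_def⟩ : ∃ y : ℝ, y = (Real.sqrt (1+x) - 1)/2 := ⟨_, rfl⟩
  have hsqX1 : 1 ≤ Real.sqrt (1+x) := by
    have h := Real.sqrt_le_sqrt (show (1:ℝ) ≤ 1 + x by linarith)
    rwa [Real.sqrt_one] at h
  have hc0 : 0 ≤ c := by rw [hc_def]; linarith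
  have hcx : c ≤ x/4 := by
    have hub : Real.sqrt (1+x) ≤ 1 + x/2 := by
      have := Real.sqrt_le_sqrt (show 1+x ≤ (1+x/2)^2 by nlinarith)
      rwa [Real.sqrt_sq (by linarith)] at this
    rw [hc_def]; linarith
  have hcK : c ≤ K*ε/4 := by linarith
  have hc12 : c ≤ 1/2 := by linarith
  -- rewrite T
  have hXx : 1 + 2 * ε * s + ε ^ 2 * r₀ ^ 4 = 1 + x := by rw [hx_def]; ring
  have hbc : b ε ^ 2 * ε / 2 = c := by
    rw [hb ε, hXx, Real.sq_sqrt (div_nonneg (by linarith) hε.le), hc_def]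
    field_simp
  rw [hT ε hε, hbc]
  obtain ⟨Jc, hJc_def⟩ : ∃ y : ℝ, y = ∫ R in (0:ℝ)..1, 1 / Real.sqrt (1 - R ^ 2 + c * (1 - R ^ 4)) := ⟨_, rfl⟩
  rw [← hJc_def]
  have hJP : |Jc - (π/2 - 3*π/8*c + 57*π/128*c^2)| ≤ 5*π/4*c^3 := by
    rw [hJc_def]; exact J_est c hc0 hc12
  -- bound on d
  obtain ⟨d, hd_def⟩ : ∃ y : ℝ, y = c - s/2*ε - (r₀^4 - s^2)/4*ε^2 := ⟨_, rfl⟩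
  have hL1 := sqrt_taylor x hx0 hx1
  have hx3 : x^3 ≤ K^3*ε^3 := by
    calc x^3 ≤ (K*ε)^3 := pow_le_pow_left₀ hx0 hxK 3
      _ = K^3*ε^3 := by ring
  have hd_id : d = (Real.sqrt (1+x) - (1 + x/2 - x^2/8))/2 - s*r₀^4/4*ε^3 - r₀^8/16*ε^4 := by
    rw [hd_def, hc_def, hx_def]; ring
  have hε43 : ε^4 ≤ ε^3 := pow_le_pow_of_le_one hε.le hε1 (by norm_num)
  have hd_bnd : |d| ≤ K₂*ε^3 := by
    have hx3' : x^3 ≤ (2*s+r₀^4)^3*ε^3 := by rw [← hK_def]; exact hx3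
    have haux := d_bound_aux s (r₀^4) ε x (Real.sqrt (1+x) - (1 + x/2 - x^2/8)) hs hr4 hε hε1 hx3' hL1
    have hK2' : K₂ = ((2*s+r₀^4)^3/32 + s*r₀^4/4 + (r₀^4)^2/16) := by
      rw [hK2_def, hK_def]; ring
    rw [hK2', hd_id]
    convert haux using 3 <;> ring
  obtain ⟨e, he_def⟩ : ∃ y : ℝ, y = c - s/2*ε := ⟨_, rfl⟩
  have he_bnd : |e| ≤ K₃*ε^2 := by
    have h1 : e = d + (r₀^4 - s^2)/4*ε^2 := by rw [he_def, hd_def]; ring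
    have hε32 : ε^3 ≤ ε^2 := pow_le_pow_of_le_one hε.le hε1 (by norm_num)
    calc |e| = |d + (r₀^4 - s^2)/4*ε^2| := by rw [h1]
      _ ≤ |d| + |(r₀^4 - s^2)/4*ε^2| := abs_add_le _ _
      _ = |d| + |r₀^4 - s^2|/4*ε^2 := by
          rw [abs_mul, abs_div, abs_of_nonneg (pow_nonneg hε.le 2)]; norm_num
      _ ≤ K₂*ε^3 + |r₀^4 - s^2|/4*ε^2 := by linarith [hd_bnd]
      _ ≤ K₂*ε^2 + |r₀^4 - s^2|/4*ε^2 :=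
          add_le_add_left (mul_le_mul_of_nonneg_left hε32 hK2) _
      _ = K₃*ε^2 := by rw [hK3_def]; ring
  have hsum_bnd : |c + s/2*ε| ≤ K₄*ε := by
    have hcs : 0 ≤ c + s/2*ε := add_nonneg hc0 (mul_nonneg (by linarith) hε.le)
    rw [abs_of_nonneg hcs, hK4_def, show (K/4 + s/2)*ε = K*ε/4 + s/2*ε by ring]
    linarith [hcK]
  -- the main decomposition
  have hmain : 4*ε*Jc - (2 * π * ε - (3 * π / 4) * s * ε ^ 2
        + ((105 * π / 128) * s ^ 2 - (3 * π / 8) * r₀ ^ 4) * ε ^ 3)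
      = 4*ε*(Jc - (π/2 - 3*π/8*c + 57*π/128*c^2))
        + (-(3*π/2)*ε*d + 57*π/32*ε*(e*(c + s/2*ε))) := by
    rw [hd_def, he_def]; ring
  rw [Real.norm_eq_abs, Real.norm_eq_abs, hmain]
  have hc3 : c^3 ≤ K^3*ε^3/64 := by
    calc c^3 ≤ (K*ε/4)^3 := pow_le_pow_left₀ hc0 hcK 3
      _ = K^3*ε^3/64 := by ring
  have h1 : |4*ε*(Jc - (π/2 - 3*π/8*c + 57*π/128*c^2))| ≤ 5*π*K^3/64*ε^4 := by
    rw [abs_mul, abs_of_nonneg (by positivity : (0:ℝ) ≤ 4*ε)]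
    calc 4*ε*|Jc - (π/2 - 3*π/8*c + 57*π/128*c^2)| ≤ 4*ε*(5*π/4*(K^3*ε^3/64)) := by
          apply mul_le_mul_of_nonneg_left _ (by positivity)
          exact hJP.trans (mul_le_mul_of_nonneg_left hc3 (by positivity))
      _ = 5*π*K^3/64*ε^4 := by ring
  have h2 : |(-(3*π/2))*ε*d| ≤ 3*π/2*K₂*ε^4 := by
    rw [abs_mul, abs_mul, abs_of_nonneg hε.le, show |(-(3*π/2))| = 3*π/2 by
      rw [abs_neg, abs_of_nonneg (by positivity)]]
    calc 3*π/2*ε*|d| ≤ 3*π/2*ε*(K₂*ε^3) := by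
          apply mul_le_mul_of_nonneg_left hd_bnd (by positivity)
      _ = 3*π/2*K₂*ε^4 := by ring
  have h3 : |57*π/32*ε*(e*(c + s/2*ε))| ≤ 57*π/32*(K₃*K₄)*ε^4 := by
    rw [abs_mul, abs_mul, abs_mul, abs_of_nonneg hε.le, abs_of_nonneg (by positivity : (0:ℝ) ≤ 57*π/32)]
    calc 57*π/32*ε*(|e| * |c + s/2*ε|) ≤ 57*π/32*ε*((K₃*ε^2)*(K₄*ε)) := by
          apply mul_le_mul_of_nonneg_left _ (by positivity)
          exact mul_le_mul he_bnd hsum_bnd (abs_nonneg _) (by positivity)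
      _ = 57*π/32*(K₃*K₄)*ε^4 := by ring
  have habs4 : |ε^4| = ε^4 := abs_of_nonneg (by positivity)
  rw [habs4]
  calc |4*ε*(Jc - (π/2 - 3*π/8*c + 57*π/128*c^2)) + (-(3*π/2)*ε*d + 57*π/32*ε*(e*(c + s/2*ε)))|
      ≤ |4*ε*(Jc - (π/2 - 3*π/8*c + 57*π/128*c^2))| + |(-(3*π/2))*ε*d + 57*π/32*ε*(e*(c + s/2*ε))| := by
        have := abs_add_le (4*ε*(Jc - (π/2 - 3*π/8*c + 57*π/128*c^2))) ((-(3*π/2))*ε*d + 57*π/32*ε*(e*(c + s/2*ε)))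
        convert this using 3 <;> ring
    _ ≤ |4*ε*(Jc - (π/2 - 3*π/8*c + 57*π/128*c^2))| + (|(-(3*π/2))*ε*d| + |57*π/32*ε*(e*(c + s/2*ε))|) := by
        have := abs_add_le ((-(3*π/2))*ε*d) (57*π/32*ε*(e*(c + s/2*ε)))
        linarith
    _ ≤ 5*π*K^3/64*ε^4 + (3*π/2*K₂*ε^4 + 57*π/32*(K₃*K₄)*ε^4) := by
        linarith
    _ = (5*π*K^3/64 + 3*π/2*K₂ + 57*π/32*(K₃*K₄)) * ε^4 := by ring
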